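/- Let (S, N) be a left-weighted quadratic normalisation of class (4,3) mod 1 for a left-cancellative monoid M containing no nontrivial invertible element. Then the associated factorability structure η satisfies, for all s ∈ S∖{1} and f ∈ M: (sf)′ = (s·f′)′ and the right complement of (sf)′ in sf equals the right complement of (sf′)′ in sf′ multiplied by the right complement of f′ in f. -/
import Mathlib


/-- Apply `F` to the first two components of a triple. -/
def app1 {X : Type*} (F : X × X → X × X) : X × X × X → X × X × X :=
  fun x => ((F (x.1, x.2.1)).1, (F (x.1, x.2.1)).2, x.2.2)

/-- Apply `F` to the last two components of a triple. -/
def app2 {X : Type*} (F : X × X → X × X) : X × X × X → X × X × X :=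
  fun x => (x.1, (F (x.2.1, x.2.2)).1, (F (x.2.1, x.2.2)).2)

/-- `F_{212}`, i.e. `F₂ F₁ F₂` (position 2 applied first). -/
def C212 {X : Type*} (F : X × X → X × X) : X × X × X → X × X × X :=
  app2 F ∘ app1 F ∘ app2 F

/-- `F_{2121}`, i.e. `F₁ F₂ F₁ F₂` (position 2 applied first). -/
def C2121 {X : Type*} (F : X × X → X × X) : X × X × X → X × X × X :=
  app1 F ∘ C212 F

/-- `F_{1212}`, i.e. `F₂ F₁ F₂ F₁` (position 1 applied first). -/
def C1212 {X : Type*} (F : X × X → X × X) : X × X × X → X × X × X :=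
  C212 F ∘ app1 F

/-- The minimal length of an `S`-word representing `f`. -/
noncomputable def lenS {M : Type*} [Monoid M] (S : Set M) (f : M) : ℕ :=
  sInf {n | ∃ l : List M, l.length = n ∧ (∀ x ∈ l, x ∈ S) ∧ l.prod = f}

/-- The sum of the lengths of the components of a triple. -/
noncomputable def tripLen {M : Type*} [Monoid M] (S : Set M) (x : M × M × M) : ℕ :=
  lenS S x.1 + lenS S x.2.1 + lenS S x.2.2

/-- A factorability structure `η` on a monoid `M` with generating subset `S`
(containing `1`): `η = (η', η̄)` is a factorisation map such that, for
`F = η ∘ μ`, on every triple the maps `F₁F₂F₁F₂`, `F₂F₁F₂`, `F₂F₁F₂F₁`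
coincide or each reduces the total length. -/
structure Factorability {M : Type*} [Monoid M] (S : Set M) (eta : M → M × M) : Prop where
  gen : ∀ f : M, ∃ l : List M, (∀ x ∈ l, x ∈ S) ∧ l.prod = f
  one_mem : (1 : M) ∈ S
  eta_one : eta 1 = (1, 1)
  head_mem : ∀ f : M, f ≠ 1 → (eta f).1 ∈ S ∧ (eta f).1 ≠ 1
  split : ∀ f : M, f ≠ 1 → (eta f).1 * (eta f).2 = f
  geodesic : ∀ f : M, f ≠ 1 → lenS S f = lenS S (eta f).1 + lenS S (eta f).2
  axm : ∀ x : M × M × M,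
    (C2121 (fun p : M × M => eta (p.1 * p.2)) x = C212 (fun p : M × M => eta (p.1 * p.2)) x ∧
      C1212 (fun p : M × M => eta (p.1 * p.2)) x = C212 (fun p : M × M => eta (p.1 * p.2)) x) ∨
    (tripLen S (C2121 (fun p : M × M => eta (p.1 * p.2)) x) < tripLen S x ∧
      tripLen S (C212 (fun p : M × M => eta (p.1 * p.2)) x) < tripLen S x ∧
      tripLen S (C1212 (fun p : M × M => eta (p.1 * p.2)) x) < tripLen S x)

/-- Apply `N` to the length-two factor of `w` at positions `i, i+1` (1-indexed). -/
def applyAt {A : Type*} (N : List A → List A) (i : ℕ) (w : List A) : List A :=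
  w.take (i - 1) ++ N ((w.drop (i - 1)).take 2) ++ w.drop (i + 1)

/-- Apply `N` to length-two factors at the given sequence of positions,
leftmost position in the list applied first. -/
def applySeq {A : Type*} (N : List A → List A) (pos : List ℕ) (w : List A) : List A :=
  pos.foldl (fun v i => applyAt N i v) w

/-- The alternating sequence of positions `s, 3-s, s, ...` of length `k` (with `s ∈ {1,2}`). -/
def altSeq : ℕ → ℕ → List ℕ
  | _, 0 => []
  | s, k + 1 => s :: altSeq (3 - s) k

/-- A quadratic normalisation: a length-preserving map, identity on letters,
satisfying `N(u|v|w) = N(u|N(v)|w)`, for which a word is normal iff all its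
length-two factors are, and which is computed by finitely many applications
of its restriction to length-two factors. -/
structure QuadraticNormalisation {A : Type*} (N : List A → List A) : Prop where
  len : ∀ w : List A, (N w).length = w.length
  letter : ∀ a : A, N [a] = [a]
  mid : ∀ u v w : List A, N (u ++ v ++ w) = N (u ++ N v ++ w)
  normal_iff : ∀ w : List A, N w = w ↔
    ∀ (u v : List A) (a b : A), w = u ++ a :: b :: v → N [a, b] = [a, b]
  reach : ∀ w : List A, ∃ pos : List ℕ, N w = applySeq N pos w

/-- The normalisation is of left-class `m`. -/
def LeftClass {A : Type*} (N : List A → List A) (m : ℕ) : Prop :=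
  ∀ w : List A, w.length = 3 → N w = applySeq N (altSeq 1 m) w

/-- The normalisation is of right-class `n`. -/
def RightClass {A : Type*} (N : List A → List A) (n : ℕ) : Prop :=
  ∀ w : List A, w.length = 3 → N w = applySeq N (altSeq 2 n) w

/-- The normalisation is of class `(m, n)`. -/
def IsClass {A : Type*} (N : List A → List A) (m n : ℕ) : Prop :=
  LeftClass N m ∧ RightClass N n

/-- `e` is an `N`-neutral element: `N(w|e) = N(e|w) = N(w)|e` for every word `w`. -/
def Neutral {A : Type*} (N : List A → List A) (e : A) : Prop :=
  ∀ w : List A, N (w ++ [e]) = N w ++ [e] ∧ N (e :: w) = N w ++ [e]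

/-- Evaluation of a word over the subset `S` in the monoid `M`. -/
def evList {M : Type*} [Monoid M] {S : Set M} (w : List ↥S) : M :=
  (w.map (fun s => (s : M))).prod

/-- `M` admits the presentation `⟨S | {w = N(w)} ∪ {e = 1}⟩`. -/
def PresentedModE {M : Type*} [Monoid M] (S : Set M) (N : List ↥S → List ↥S) (e : ↥S) : Prop :=
  Function.Surjective (⇑(FreeMonoid.lift (fun s : ↥S => (s : M)))) ∧
  ∀ u v : FreeMonoid ↥S,
    FreeMonoid.lift (fun s : ↥S => (s : M)) u = FreeMonoid.lift (fun s : ↥S => (s : M)) v ↔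
      conGen (fun u v : FreeMonoid ↥S =>
        FreeMonoid.toList v = N (FreeMonoid.toList u) ∨ (u = FreeMonoid.of e ∧ v = 1)) u v

open Classical in
/-- Remove all occurrences of `e` from a word. -/
noncomputable def removeE {A : Type*} (e : A) : List A → List A
  | [] => []
  | a :: w => if a = e then removeE e w else a :: removeE e w


section Machinery
variable {M : Type*} [Monoid M] {S : Set M}

variable {M : Type*} [Monoid M] {S : Set M}

lemma evList_nil : (evList ([] : List ↥S)) = (1:M) := rfl

lemma evList_cons (a : ↥S) (w : List ↥S) : evList (a :: w) = (a : M) * evList w := by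
  simp [evList]

lemma removeE_of_forall_ne {A : Type*} (e : A) (w : List A) (h : ∀ x ∈ w, x ≠ e) :
    removeE e w = w := by
  induction w with
  | nil => rfl
  | cons a t ih =>
    rw [removeE, if_neg (h a (by simp)), ih (fun x hx => h x (by simp [hx]))]

lemma removeE_length_lt {A : Type*} (e : A) (w : List A) (h : e ∈ w) :
    (removeE e w).length < w.length := by
  induction w with
  | nil => simp at h
  | cons a t ih =>
    rw [removeE]
    by_cases ha : a = e
    · rw [if_pos ha]
      have : (removeE e t).length ≤ t.length := by
        clear ih h ha
        induction t with
        | nil => simp [removeE]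
        | cons b u ihu =>
          rw [removeE]
          by_cases hb : b = e
          · rw [if_pos hb]; simp; omega
          · rw [if_neg hb]; simp; omega
      simp; omega
    · rw [if_neg ha]
      have ht : e ∈ t := by
        rcases List.mem_cons.mp h with h1 | h1
        · exact absurd h1.symm ha
        · exact h1
      simpa using ih ht

lemma evList_removeE (e : ↥S) (he : (e : M) = 1) (w : List ↥S) :
    evList (removeE e w) = evList w := by
  induction w with
  | nil => rfl
  | cons a t ih =>
    rw [removeE]
    by_cases ha : a = e
    · rw [if_pos ha, ih, evList_cons, ha, he, one_mul]
    · rw [if_neg ha, evList_cons, evList_cons, ih]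


variable {N : List ↥S → List ↥S} {e : ↥S}

/-- `N` preserves evaluation. -/
lemma evList_N (hPres : PresentedModE S N e) (w : List ↥S) :
    evList (N w) = evList w := by
  have h := (hPres.2 (FreeMonoid.ofList w) (FreeMonoid.ofList (N w))).mpr
    (ConGen.Rel.of _ _ (Or.inl (by simp [FreeMonoid.toList_ofList])))
  simpa [FreeMonoid.lift_ofList, evList] using h.symm

/-- `N` is idempotent. -/
lemma N_idem (hQ : QuadraticNormalisation N) (w : List ↥S) : N (N w) = N w := by
  have := hQ.mid [] w []
  simpa using this.symm

/-- Any length-2 factor of a normal word is normal. -/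
lemma pair_normal (hQ : QuadraticNormalisation N) {w : List ↥S} (hw : N w = w)
    (u v : List ↥S) (a b : ↥S) (h : w = u ++ a :: b :: v) : N [a, b] = [a, b] :=
  (hQ.normal_iff w).mp hw u v a b h

/-- Tail of a normal word is normal. -/
lemma tail_normal (hQ : QuadraticNormalisation N) {q : ↥S} {w : List ↥S}
    (hw : N (q :: w) = q :: w) : N w = N w ∧ N w = w := by
  refine ⟨rfl, (hQ.normal_iff w).mpr ?_⟩
  intro u v a b h
  exact pair_normal hQ hw (q :: u) v a b (by rw [h]; rfl)

/-- `e | x` normal forces `x = e`. -/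
lemma eq_e_of_normal_e (hQ : QuadraticNormalisation N) (hNeu : Neutral N e)
    {x : ↥S} (h : N [e, x] = [e, x]) : x = e := by
  have h2 : N ((e : ↥S) :: [x]) = N [x] ++ [e] := (hNeu [x]).2
  rw [hQ.letter, h] at h2
  exact ((List.cons.injEq _ _ _ _).mp h2).1.symm

/-- The right-class-3 domino computation. -/
lemma domino (hQ : QuadraticNormalisation N) (h3 : RightClass N 3)
    {a q q₂ s₁ t₁ u₁ u₂ : ↥S} (hn : N [q, q₂] = [q, q₂])
    (h1 : N [a, q] = [s₁, t₁]) (h2 : N [t₁, q₂] = [u₁, u₂]) :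
    N [a, q, q₂] = [s₁, u₁, u₂] := by
  have hc := h3 [a, q, q₂] (by simp)
  have e1 : altSeq 2 3 = [2, 1, 2] := rfl
  rw [hc, e1]
  show applyAt N 2 (applyAt N 1 (applyAt N 2 [a, q, q₂])) = [s₁, u₁, u₂]
  have s1 : applyAt N 2 [a, q, q₂] = [a, q, q₂] := by
    simp [applyAt, hn]
  rw [s1]
  have s2 : applyAt N 1 [a, q, q₂] = [s₁, t₁, q₂] := by
    simp [applyAt]
    rw [h1]
    rfl
  rw [s2]
  simp [applyAt, h2]

/-- Every element has an `e`-free normal word. -/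
lemma exists_normal_efree (hQ : QuadraticNormalisation N) (hPres : PresentedModE S N e) (he : (e : M) = 1)
    (hgen : ∀ f : M, ∃ l : List M, (∀ x ∈ l, x ∈ S) ∧ l.prod = f) (f : M) :
    ∃ v : List ↥S, evList v = f ∧ N v = v ∧ ∀ x ∈ v, x ≠ e := by
  obtain ⟨l, hl, hprod⟩ := hgen f
  have hw : ∃ w : List ↥S, evList w = f := by
    subst hprod
    induction l with
    | nil => exact ⟨[], rfl⟩
    | cons a t ih =>
      obtain ⟨w, hwe⟩ := ih (fun x hx => hl x (by simp [hx]))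
      exact ⟨⟨a, hl a (by simp)⟩ :: w, by rw [evList_cons, hwe]; simp⟩
  obtain ⟨w, hwf⟩ := hw
  subst hwf
  clear hl hprod l
  suffices H : ∀ n (w : List ↥S), w.length ≤ n →
      ∃ v : List ↥S, evList v = evList w ∧ N v = v ∧ ∀ x ∈ v, x ≠ e by
    exact H w.length w le_rfl
  intro n
  induction n with
  | zero =>
    intro w hw0
    have : w = [] := List.length_eq_zero_iff.mp (Nat.le_zero.mp hw0)
    subst this
    refine ⟨[], rfl, ?_, by simp⟩
    have := hQ.len ([] : List ↥S)
    exact List.length_eq_zero_iff.mp (by simp [this])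
  | succ n ih =>
    intro w hwn
    by_cases hme : e ∈ N w
    · obtain ⟨v, hv1, hv2, hv3⟩ := ih (removeE e (N w))
        (by
          have h1 := removeE_length_lt e (N w) hme
          have h2 := hQ.len w
          omega)
      exact ⟨v, by rw [hv1, evList_removeE e he (N w), evList_N hPres], hv2, hv3⟩
    · exact ⟨N w, evList_N hPres w, N_idem hQ w, fun x hx hxe => hme (hxe ▸ hx)⟩

/-- Computing `eta` from an `e`-free normal word. -/
lemma eta_of_word (eta : M → M × M)
    (hetaN : ∀ f : M, f ≠ 1 → ∀ w : List ↥S, evList w = f →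
      ∃ (s : ↥S) (rest : List ↥S),
        removeE e (N w) = s :: rest ∧ eta f = ((s : M), evList rest))
    {g : M} (hg : g ≠ 1) (p : ↥S) (r : List ↥S) (hev : evList (p :: r) = g)
    (hN : N (p :: r) = p :: r) (hfree : ∀ x ∈ p :: r, x ≠ e) :
    eta g = ((p : M), evList r) := by
  obtain ⟨s, rest, h1, h2⟩ := hetaN g hg (p :: r) hev
  rw [hN, removeE_of_forall_ne e _ hfree] at h1
  obtain ⟨h3, h4⟩ := List.cons.inj h1
  rw [h2, ← h3, ← h4]

/-- The key induction: left multiplication by a generator. -/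
lemma key_induction
    (hnoinv : ∀ a b : M, a * b = 1 → a = 1)
    (hQ : QuadraticNormalisation N) (hNeu : Neutral N e)
    (hPres : PresentedModE S N e) (h3 : RightClass N 3)
    (he : (e : M) = 1)
    (hgen : ∀ f : M, ∃ l : List M, (∀ x ∈ l, x ∈ S) ∧ l.prod = f)
    (eta : M → M × M)
    (hetaN : ∀ f : M, f ≠ 1 → ∀ w : List ↥S, evList w = f →
      ∃ (s : ↥S) (rest : List ↥S),
        removeE e (N w) = s :: rest ∧ eta f = ((s : M), evList rest)) :
    ∀ n (a q : ↥S) (tail : List ↥S), tail.length = n →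
      N (q :: tail) = q :: tail → (∀ x ∈ q :: tail, x ≠ e) →
      eta ((a : M) * evList (q :: tail)) =
        ((eta ((a : M) * (q : M))).1, (eta ((a : M) * (q : M))).2 * evList tail) := by
  have val_ne_one : ∀ x : ↥S, x ≠ e → (x : M) ≠ 1 := by
    intro x hx h1
    exact hx (Subtype.ext (by rw [h1, he]))
  intro n
  induction n with
  | zero =>
    intro a q tail hlen hNv hfree
    have htail : tail = [] := List.length_eq_zero_iff.mp hlen
    subst htail
    rw [evList_cons, evList_nil, mul_one]
    exact Prod.ext rfl (mul_one _).symm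
  | succ n ih =>
    intro a q tail hlen hNv hfree
    cases tail with
    | nil => simp at hlen
    | cons q₂ rest =>
      have hq2e : q₂ ≠ e := hfree q₂ (by simp)
      -- the two N-pairs
      obtain ⟨s₁, t₁, hst⟩ : ∃ s₁ t₁ : ↥S, N [a, q] = [s₁, t₁] := by
        have hl2 := hQ.len [a, q]
        exact List.length_eq_two.mp (by simpa using hl2)
      obtain ⟨u₁, u₂, huv⟩ : ∃ u₁ u₂ : ↥S, N [t₁, q₂] = [u₁, u₂] := by
        have hl2 := hQ.len [t₁, q₂]
        exact List.length_eq_two.mp (by simpa using hl2)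
      -- evaluations
      have Mst : (s₁ : M) * t₁ = (a : M) * q := by
        have h := evList_N hPres [a, q]
        rw [hst] at h
        simpa [evList_cons, evList_nil, mul_one] using h
      have Muv : (u₁ : M) * u₂ = (t₁ : M) * q₂ := by
        have h := evList_N hPres [t₁, q₂]
        rw [huv] at h
        simpa [evList_cons, evList_nil, mul_one] using h
      have htq2 : (t₁ : M) * q₂ ≠ 1 := by
        intro h
        have ht1 : (t₁ : M) = 1 := hnoinv _ _ h
        rw [ht1, one_mul] at h
        exact val_ne_one q₂ hq2e h
      -- the domino
      have hqq2 : N [q, q₂] = [q, q₂] := pair_normal hQ hNv [] rest q q₂ rfl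
      have hdom : N [a, q, q₂] = [s₁, u₁, u₂] := domino hQ h3 hqq2 hst huv
      have hnorm3 : N [s₁, u₁, u₂] = [s₁, u₁, u₂] := by
        have h := N_idem hQ [a, q, q₂]
        rwa [hdom] at h
      have hu12 : N [u₁, u₂] = [u₁, u₂] := pair_normal hQ hnorm3 [s₁] [] u₁ u₂ rfl
      have hs1u1 : N [s₁, u₁] = [s₁, u₁] := pair_normal hQ hnorm3 [] [u₂] s₁ u₁ rfl
      have hu1e : u₁ ≠ e := by
        intro h
        rw [h] at hu12
        have h2 := eq_e_of_normal_e hQ hNeu hu12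
        rw [h, h2] at Muv
        rw [← Muv, he, one_mul] at htq2
        exact htq2 rfl
      have hs1e : s₁ ≠ e := by
        intro h
        rw [h] at hs1u1
        exact hu1e (eq_e_of_normal_e hQ hNeu hs1u1)
      -- eta (t₁ * q₂) = (u₁, u₂)
      have heta_tq : eta ((t₁ : M) * q₂) = ((u₁ : M), (u₂ : M)) := by
        by_cases hu2e : u₂ = e
        · have hval : (u₂ : M) = 1 := by rw [hu2e, he]
          have hev : evList [u₁] = (t₁ : M) * q₂ := by
            rw [← Muv, hval, mul_one]; simp [evList_cons, evList_nil]
          have h := eta_of_word eta hetaN htq2 u₁ [] hev (hQ.letter u₁)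
            (by intro x hx; simp at hx; rw [hx]; exact hu1e)
          rw [h, hval]; rfl
        · have hev : evList [u₁, u₂] = (t₁ : M) * q₂ := by
            rw [← Muv]; simp [evList_cons, evList_nil]
          have h := eta_of_word eta hetaN htq2 u₁ [u₂] hev hu12
            (by intro x hx; simp at hx
                rcases hx with h | h <;> rw [h]
                exacts [hu1e, hu2e])
          rw [h]; simp [evList_cons, evList_nil]
      -- induction hypothesis
      have hw2 : N (q₂ :: rest) = q₂ :: rest := (tail_normal hQ hNv).2
      have ihv := ih t₁ q₂ rest (by simpa using hlen) hw2
        (fun x hx => hfree x (by simp at hx ⊢; tauto))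
      rw [heta_tq] at ihv
      -- the element g = t₁ · ev (q₂ :: rest)
      set g : M := (t₁ : M) * evList (q₂ :: rest) with hg_def
      have hgne : g ≠ 1 := by
        intro h
        have ht1 : (t₁ : M) = 1 := hnoinv _ _ h
        rw [hg_def, ht1, one_mul, evList_cons] at h
        exact val_ne_one q₂ hq2e (hnoinv _ _ h)
      obtain ⟨z, hz_ev, hzN, hz_free⟩ := exists_normal_efree hQ hPres he hgen g
      cases z with
      | nil => exact absurd hz_ev.symm hgne
      | cons p ztail =>
        have hpz := eta_of_word eta hetaN hgne p ztail hz_ev hzN hz_free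
        rw [ihv] at hpz
        have hp1 : (u₁ : M) = (p : M) := by
          have h := congrArg Prod.fst hpz
          simpa using h
        have hp : p = u₁ := Subtype.coe_injective hp1.symm
        subst hp
        have hztail : evList ztail = (u₂ : M) * evList rest := by
          have h := congrArg Prod.snd hpz
          simpa using h.symm
        -- the word W = s₁ :: p :: ztail is normal and e-free
        have hWnorm : N (s₁ :: p :: ztail) = s₁ :: p :: ztail := by
          apply (hQ.normal_iff _).mpr
          intro u v x y h
          cases u with
          | nil =>
            obtain ⟨h1, h2, _⟩ : s₁ = x ∧ p = y ∧ ztail = v := by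
              simpa using h
            rw [← h1, ← h2]; exact hs1u1
          | cons hd tl =>
            have h2 : p :: ztail = tl ++ x :: y :: v := (List.cons.inj h).2
            exact pair_normal hQ hzN tl v x y h2
        have hWfree : ∀ x ∈ s₁ :: p :: ztail, x ≠ e := by
          intro x hx
          rcases List.mem_cons.mp hx with h | h
          · rw [h]; exact hs1e
          · exact hz_free x h
        have hWev : evList (s₁ :: p :: ztail) = (a : M) * evList (q :: q₂ :: rest) := by
          rw [evList_cons, hz_ev, hg_def,
            show evList (q :: q₂ :: rest) = (q : M) * evList (q₂ :: rest) from
              evList_cons _ _,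
            ← mul_assoc, ← mul_assoc, Mst]
        have hane : (a : M) * evList (q :: q₂ :: rest) ≠ 1 := by
          rw [← hWev, evList_cons]
          intro h
          exact val_ne_one s₁ hs1e (hnoinv _ _ h)
        have hLHS := eta_of_word eta hetaN hane s₁ (p :: ztail) hWev hWnorm hWfree
        -- eta (a * q) = (s₁, t₁)
        have haq : (a : M) * q = (s₁ : M) * t₁ := Mst.symm
        have haqne : (a : M) * q ≠ 1 := by
          rw [haq]
          intro h
          exact val_ne_one s₁ hs1e (hnoinv _ _ h)
        have heta_aq : eta ((a : M) * q) = ((s₁ : M), (t₁ : M)) := by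
          by_cases ht1e : t₁ = e
          · have hval : (t₁ : M) = 1 := by rw [ht1e, he]
            have hev : evList [s₁] = (a : M) * q := by
              rw [haq, hval, mul_one]; simp [evList_cons, evList_nil]
            have h := eta_of_word eta hetaN haqne s₁ [] hev (hQ.letter s₁)
              (by intro x hx; simp at hx; rw [hx]; exact hs1e)
            rw [h, hval]; rfl
          · have hst_norm : N [s₁, t₁] = [s₁, t₁] := by
              have h := N_idem hQ [a, q]
              rwa [hst] at h
            have hev : evList [s₁, t₁] = (a : M) * q := by
              rw [haq]; simp [evList_cons, evList_nil]
            have h := eta_of_word eta hetaN haqne s₁ [t₁] hev hst_norm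
              (by intro x hx; simp at hx
                  rcases hx with h | h <;> rw [h]
                  exacts [hs1e, ht1e])
            rw [h]; simp [evList_cons, evList_nil]
        rw [hLHS, heta_aq]
        refine Prod.ext rfl ?_
        show evList (p :: ztail) = (t₁ : M) * evList (q₂ :: rest)
        rw [hz_ev]

end Machinery

/-- let `(S, N)` be a left-weighted quadratic normalisation of
class `(4,3)` mod `1` for a left-cancellative monoid `M` with no nontrivial
invertible element. Then the associated factorability structure `η` satisfies
`(sf)' = (s·f')'` and `overline{sf} = overline{s·f'} · f̄` for all `s ∈ S∖{1}`
and `f ∈ M`. -/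
theorem leftWeighted_class43_strong_conditions {M : Type*} [Monoid M] (S : Set M)
    (hcancel : ∀ a b c : M, a * b = a * c → b = c)
    (hnoinv : ∀ a b : M, a * b = 1 → a = 1)
    (N : List ↥S → List ↥S) (e : ↥S) (he : (e : M) = 1)
    (hQ : QuadraticNormalisation N) (hNeu : Neutral N e)
    (hPres : PresentedModE S N e) (h43 : IsClass N 4 3)
    (hLW : ∀ s t s' t' : ↥S, N [s, t] = [s', t'] → ∃ c : M, (s : M) * c = (s' : M))
    (eta : M → M × M) (hfac : Factorability S eta)
    (heta1 : eta 1 = (1, 1))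
    (hetaN : ∀ f : M, f ≠ 1 → ∀ w : List ↥S, evList w = f →
      ∃ (s : ↥S) (rest : List ↥S),
        removeE e (N w) = s :: rest ∧ eta f = ((s : M), evList rest)) :
    ∀ s : M, s ∈ S → s ≠ 1 → ∀ f : M,
      (eta (s * f)).1 = (eta (s * (eta f).1)).1 ∧
      (eta (s * f)).2 = (eta (s * (eta f).1)).2 * (eta f).2 := by
  intro s hs hs1 f
  by_cases hf : f = 1
  · subst hf
    rw [heta1]
    exact ⟨rfl, (mul_one _).symm⟩
  · obtain ⟨v, hvev, hvN, hvfree⟩ := exists_normal_efree hQ hPres he hfac.gen f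
    cases v with
    | nil => exact absurd hvev.symm hf
    | cons q tail =>
      have hfeta : eta f = ((q : M), evList tail) :=
        eta_of_word eta hetaN hf q tail hvev hvN hvfree
      have hkey := key_induction hnoinv hQ hNeu hPres h43.2 he hfac.gen eta hetaN
        tail.length ⟨s, hs⟩ q tail rfl hvN hvfree
      have hcoe : ((⟨s, hs⟩ : ↥S) : M) = s := rfl
      rw [hcoe, hvev] at hkey
      rw [hkey, hfeta]
      exact ⟨rfl, rfl⟩
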